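/- The centraliser algebra S_u(1,r) = End_{H_u(r)}(x_{(r)}H_u(r)) is a commutative R-algebra. -/
import Mathlib


/-- The monomial `L^b` with exponent vector `b ∈ {0,…,m−1}^r`. -/
def akLmonF {H : Type} [Ring H] (L : ℕ → H) {r m : ℕ} (b : Fin r → Fin m) : H :=
  (List.ofFn (fun j : Fin r => L ((j : ℕ) + 1) ^ ((b j : ℕ)))).prod

/-- Coxeter length (number of inversions) of a permutation. -/
def permLen {r : ℕ} (w : Equiv.Perm (Fin r)) : ℕ :=
  (Finset.univ.filter (fun p : Fin r × Fin r => p.1 < p.2 ∧ w p.2 < w p.1)).card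

section PermLenLemmas
variable {r : ℕ}

/-- `swap ⟨i-1⟩ ⟨i⟩` reverses the order of an increasing pair iff the pair is exactly
`(⟨i-1⟩, ⟨i⟩)`. -/
lemma swap_adj_lt {i : ℕ} (h1 : 1 ≤ i) (h2 : i < r) (p1 p2 : Fin r) (hp : p1 < p2) :
    Equiv.swap (⟨i - 1, by omega⟩ : Fin r) ⟨i, h2⟩ p1 <
      Equiv.swap (⟨i - 1, by omega⟩ : Fin r) ⟨i, h2⟩ p2
      ↔ ¬(p1 = (⟨i - 1, by omega⟩ : Fin r) ∧ p2 = (⟨i, h2⟩ : Fin r)) := by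
  simp only [Equiv.swap_apply_def, Fin.lt_def, Fin.ext_iff] at *
  split_ifs <;> simp_all <;> omega

lemma permLen_one : permLen (1 : Equiv.Perm (Fin r)) = 0 := by
  unfold permLen
  rw [Finset.card_eq_zero, Finset.filter_eq_empty_iff]
  rintro p -
  simp only [Equiv.Perm.one_apply]
  rintro ⟨h, h'⟩
  exact absurd h' (lt_asymm h)

lemma permLen_swap_adj {i : ℕ} (h1 : 1 ≤ i) (h2 : i < r) :
    permLen (Equiv.swap (⟨i - 1, by omega⟩ : Fin r) ⟨i, h2⟩) = 1 := by
  unfold permLen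
  rw [Finset.card_eq_one]
  refine ⟨(⟨i - 1, by omega⟩, ⟨i, h2⟩), ?_⟩
  ext p
  obtain ⟨p1, p2⟩ := p
  simp only [Finset.mem_filter, Finset.mem_univ, true_and, Finset.mem_singleton, Prod.mk.injEq]
  constructor
  · rintro ⟨hlt, hinv⟩
    exact not_not.mp (fun hne =>
      absurd ((swap_adj_lt h1 h2 p1 p2 hlt).mpr hne) (not_lt.mpr hinv.le))
  · rintro ⟨rfl, rfl⟩
    refine ⟨by simp [Fin.lt_def]; omega, ?_⟩
    rw [Equiv.swap_apply_left, Equiv.swap_apply_right]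
    simp [Fin.lt_def]; omega

end PermLenLemmas
section Count
variable {r : ℕ}

lemma permLen_mul_swap (w : Equiv.Perm (Fin r)) {i : ℕ} (h1 : 1 ≤ i) (h2 : i < r)
    (hd : w ⟨i - 1, by omega⟩ < w ⟨i, h2⟩) :
    permLen (w * Equiv.swap ⟨i - 1, by omega⟩ ⟨i, h2⟩) = permLen w + 1 := by
  set a : Fin r := ⟨i - 1, by omega⟩ with ha
  set b : Fin r := ⟨i, h2⟩ with hb
  set s := Equiv.swap a b with hs
  have hab : a < b := by simp [ha, hb, Fin.lt_def]; omega
  have hsa : s a = b := Equiv.swap_apply_left a b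
  have hsb : s b = a := Equiv.swap_apply_right a b
  have hss : ∀ p : Fin r, s (s p) = p := fun p => Equiv.swap_apply_self a b p
  set A := Finset.univ.filter
    (fun p : Fin r × Fin r => p.1 < p.2 ∧ (w * s) p.2 < (w * s) p.1) with hA
  set B := Finset.univ.filter
    (fun p : Fin r × Fin r => p.1 < p.2 ∧ w p.2 < w p.1) with hB
  have habA : (a, b) ∈ A := by
    simp only [hA, Finset.mem_filter, Finset.mem_univ, true_and]
    refine ⟨hab, ?_⟩
    simp only [Equiv.Perm.mul_apply, hsa, hsb]
    exact hd
  have hcard : B.card = (A.erase (a, b)).card := by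
    apply Finset.card_bij (fun p _ => (s p.1, s p.2))
    · rintro ⟨p1, p2⟩ hp
      simp only [hB, Finset.mem_filter, Finset.mem_univ, true_and] at hp
      obtain ⟨hlt, hinv⟩ := hp
      have hne : ¬(p1 = a ∧ p2 = b) := by
        rintro ⟨rfl, rfl⟩; exact absurd hd (not_lt.mpr hinv.le)
      have hslt : s p1 < s p2 := (swap_adj_lt h1 h2 p1 p2 hlt).mpr hne
      rw [Finset.mem_erase]
      constructor
      · rintro hc
        rw [Prod.mk.injEq] at hc
        have : p1 = s a ∧ p2 = s b := by
          constructor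
          · rw [← hc.1, hss]
          · rw [← hc.2, hss]
        rw [hsa, hsb] at this
        rw [this.1, this.2] at hlt
        exact absurd hlt (lt_asymm hab)
      · simp only [hA, Finset.mem_filter, Finset.mem_univ, true_and]
        refine ⟨hslt, ?_⟩
        simpa only [Equiv.Perm.mul_apply, hss] using hinv
    · rintro ⟨p1, p2⟩ - ⟨q1, q2⟩ - hEq
      rw [Prod.mk.injEq] at hEq ⊢
      exact ⟨s.injective hEq.1, s.injective hEq.2⟩
    · rintro ⟨p1, p2⟩ hp
      rw [Finset.mem_erase] at hp
      obtain ⟨hne, hpA⟩ := hp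
      simp only [hA, Finset.mem_filter, Finset.mem_univ, true_and] at hpA
      obtain ⟨hlt, hinv⟩ := hpA
      have hne' : ¬(p1 = a ∧ p2 = b) := by
        rintro ⟨rfl, rfl⟩; exact hne rfl
      have hslt : s p1 < s p2 := (swap_adj_lt h1 h2 p1 p2 hlt).mpr hne'
      refine ⟨(s p1, s p2), ?_, ?_⟩
      · simp only [hB, Finset.mem_filter, Finset.mem_univ, true_and]
        refine ⟨hslt, ?_⟩
        simpa only [Equiv.Perm.mul_apply] using hinv
      · simp [hss]
  have : permLen (w * s) = A.card := rfl
  rw [this, ← Finset.card_erase_add_one habA, ← hcard]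
  rfl

end Count
section Descent
variable {r : ℕ}

lemma perm_eq_one_of_no_descent (w : Equiv.Perm (Fin r))
    (h : ∀ (i : ℕ) (h1 : 1 ≤ i) (h2 : i < r),
      ¬ w ⟨i, h2⟩ < w ⟨i - 1, by omega⟩) : w = 1 := by
  have adj : ∀ (j : ℕ) (hj : j + 1 < r), w ⟨j, by omega⟩ < w ⟨j + 1, hj⟩ := by
    intro j hj
    have hh := h (j + 1) (by omega) hj
    have he : (⟨j + 1 - 1, by omega⟩ : Fin r) = ⟨j, by omega⟩ := by simp
    rw [he] at hh
    rcases lt_trichotomy (w ⟨j, by omega⟩) (w ⟨j + 1, hj⟩) with hlt | heq | hgt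
    · exact hlt
    · exact absurd (w.injective heq) (by simp [Fin.ext_iff])
    · exact absurd hgt hh
  have chain : ∀ (k pv : ℕ) (hq : pv + k + 1 < r),
      w ⟨pv, by omega⟩ < w ⟨pv + k + 1, hq⟩ := by
    intro k
    induction k with
    | zero => intro pv hq; exact adj pv hq
    | succ k ih =>
      intro pv hq
      exact lt_trans (ih pv (by omega)) (adj (pv + k + 1) hq)
  have hmono : StrictMono w := by
    intro p q hpq
    obtain ⟨pv, hp⟩ := p
    obtain ⟨qv, hq⟩ := q
    rw [Fin.mk_lt_mk] at hpq
    have hqe : (⟨qv, hq⟩ : Fin r) = ⟨pv + (qv - pv - 1) + 1, by omega⟩ := by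
      simp [Fin.ext_iff]; omega
    rw [hqe]
    exact chain (qv - pv - 1) pv (by omega)
  have hid : ∀ p : Fin r, w p = p := by
    intro p
    let e : Fin r ≃o Fin r :=
      { toEquiv := w
        map_rel_iff' := fun {x y} => hmono.le_iff_le }
    exact Fin.ext (Fin.coe_orderIso_apply e p)
  ext p
  simp [hid p]

lemma descent_of_permLen_pos (w : Equiv.Perm (Fin r)) (hw : permLen w ≠ 0) :
    ∃ (i : ℕ) (h1 : 1 ≤ i) (h2 : i < r), w ⟨i, h2⟩ < w ⟨i - 1, by omega⟩ := by
  by_contra h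
  push_neg at h
  rw [perm_eq_one_of_no_descent w (fun i h1 h2 => not_lt.mpr (h i h1 h2)),
    permLen_one] at hw
  exact hw rfl

end Descent

/-- The centraliser algebra `S_u(1,r) = End_{H_u(r)}(x_{(r)}H_u(r))`
(endomorphisms of the right `H_u(r)`-module `x_{(r)}H_u(r)`, viewed as a left module
over the opposite ring) is commutative. -/
theorem slim_schur_1_r_commutative
    (R : Type) [CommRing R] (q : R) (hq : IsUnit q) (m r : ℕ) (hm : 0 < m)
    (u : Fin m → R)
    (H : Type) [Ring H] [Algebra R H]
    (T L : ℕ → H)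
    (hquad : ∀ i, 1 ≤ i → i ≤ r - 1 → (T i + 1) * (T i - algebraMap R H q) = 0)
    (hbraid : ∀ i, 1 ≤ i → i + 1 ≤ r - 1 → T i * T (i + 1) * T i = T (i + 1) * T i * T (i + 1))
    (hTT : ∀ i j, 1 ≤ i → j ≤ r - 1 → i + 1 < j → T i * T j = T j * T i)
    (hLL : ∀ i j, 1 ≤ i → i ≤ r → 1 ≤ j → j ≤ r → L i * L j = L j * L i)
    (hcyclo : (List.ofFn (fun k : Fin m => L 1 - algebraMap R H (u k))).prod = 0)
    (hTLT : ∀ i, 1 ≤ i → i ≤ r - 1 → T i * L i * T i = algebraMap R H q * L (i + 1))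
    (hLT : ∀ i j, 1 ≤ i → i ≤ r - 1 → 1 ≤ j → j ≤ r → j ≠ i → j ≠ i + 1 →
      L j * T i = T i * L j)
    (Tw : Equiv.Perm (Fin r) → H)
    (hTw1 : Tw 1 = 1)
    (hTwmul : ∀ w w' : Equiv.Perm (Fin r), permLen (w * w') = permLen w + permLen w' →
      Tw (w * w') = Tw w * Tw w')
    (hTwgen : ∀ (i : ℕ) (h1 : 1 ≤ i) (h2 : i < r),
      Tw (Equiv.swap ⟨i - 1, by omega⟩ ⟨i, h2⟩) = T i)
    -- `{T_w L^b : w ∈ S_r, b ∈ (ℤ/m)^r}` is an `R`-basis of `H_u(r)`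
    (hLI : LinearIndependent R
      (fun p : Equiv.Perm (Fin r) × (Fin r → Fin m) => Tw p.1 * akLmonF L p.2))
    (hSpan : ⊤ ≤ Submodule.span R
      (Set.range fun p : Equiv.Perm (Fin r) × (Fin r → Fin m) => Tw p.1 * akLmonF L p.2))
    -- `x_{(r)} = Σ_{w ∈ S_r} T_w`
    (x : H) (hx : x = ∑ w : Equiv.Perm (Fin r), Tw w) :
    -- `x_{(r)}H_u(r)` is the cyclic right module generated by `x_{(r)}`, i.e. the span
    -- of `{x_{(r)}}` over the opposite ring `H_u(r)ᵐᵒᵖ`; its endomorphism algebra is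
    -- commutative
    ∀ f g : Module.End Hᵐᵒᵖ ↥(Submodule.span Hᵐᵒᵖ ({x} : Set H)), f * g = g * f := by
  intro f g
  set c : H := algebraMap R H q with hc
  have hcomm : ∀ y : H, y * c = c * y := fun y => (Algebra.commutes q y).symm
  -- Step 1 : x * T i = c * x
  have key : ∀ (i : ℕ), 1 ≤ i → ∀ (h2 : i < r), x * T i = c * x := by
    intro i h1 h2
    set a : Fin r := ⟨i - 1, by omega⟩ with ha
    set b : Fin r := ⟨i, h2⟩ with hb
    set s := Equiv.swap a b with hs
    have hab : a ≠ b := by simp [ha, hb, Fin.ext_iff]; omega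
    have hTws : Tw s = T i := hTwgen i h1 h2
    have hD : ∀ w : Equiv.Perm (Fin r), w a < w b → Tw (w * s) = Tw w * T i := by
      intro w hw
      rw [hTwmul w s (by
        rw [permLen_mul_swap w h1 h2 hw, permLen_swap_adj h1 h2]), hTws]
    have hquad' : T i + T i * T i = c * (1 + T i) := by
      have h0 := hquad i h1 (by omega)
      have e : (T i + 1) * (T i - c) = (T i + T i * T i) - (c + T i * c) := by
        noncomm_ring
      rw [e, sub_eq_zero] at h0
      rw [h0, hcomm (T i), mul_add, mul_one]
    set D := Finset.univ.filter (fun w : Equiv.Perm (Fin r) => w a < w b) with hDdef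
    set D' := Finset.univ.filter (fun w : Equiv.Perm (Fin r) => ¬ w a < w b) with hD'def
    have hmemD : ∀ w : Equiv.Perm (Fin r), w ∈ D ↔ w a < w b := by
      intro w; simp [hDdef]
    have hmemD' : ∀ w : Equiv.Perm (Fin r), w ∈ D' ↔ ¬ w a < w b := by
      intro w; simp [hD'def]
    have hws : ∀ w : Equiv.Perm (Fin r), (w * s) a = w b ∧ (w * s) b = w a := by
      intro w
      constructor
      · simp [hs, Equiv.Perm.mul_apply, Equiv.swap_apply_left]
      · simp [hs, Equiv.Perm.mul_apply, Equiv.swap_apply_right]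
    have hre : ∀ (F : Equiv.Perm (Fin r) → H),
        ∑ w ∈ D', F w = ∑ w ∈ D, F (w * s) := by
      intro F
      apply Finset.sum_nbij' (fun w => w * s) (fun w => w * s)
      · intro w hw
        rw [hmemD'] at hw
        rw [hmemD, (hws w).1, (hws w).2]
        exact lt_of_le_of_ne (not_lt.mp hw) (fun hc' => hab (w.injective hc'.symm ▸ rfl))
      · intro w hw
        rw [hmemD] at hw
        rw [hmemD', (hws w).1, (hws w).2]
        exact not_lt.mpr hw.le
      · intro w hw
        simp [hs, mul_assoc, Equiv.swap_mul_self]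
      · intro w hw
        simp [hs, mul_assoc, Equiv.swap_mul_self]
      · intro w hw
        simp [hs, mul_assoc, Equiv.swap_mul_self]
    have hx' : x = ∑ w ∈ D, Tw w + ∑ w ∈ D', Tw w := by
      rw [hx, Finset.sum_filter_add_sum_filter_not]
    rw [hx', add_mul, Finset.sum_mul, Finset.sum_mul,
      hre (fun w => Tw w * T i), hre Tw, ← Finset.sum_add_distrib,
      ← Finset.sum_add_distrib, Finset.mul_sum]
    apply Finset.sum_congr rfl
    intro w hw
    rw [hmemD] at hw
    rw [hD w hw]
    calc Tw w * T i + Tw w * T i * T i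
        = Tw w * (T i + T i * T i) := by rw [mul_add, mul_assoc]
      _ = Tw w * (c * (1 + T i)) := by rw [hquad']
      _ = c * (Tw w * (1 + T i)) := by
          rw [← mul_assoc, hcomm (Tw w), mul_assoc]
      _ = c * (Tw w + Tw w * T i) := by rw [mul_add, mul_one]
  -- Step 2 : x * Tw w = c ^ (permLen w) * x
  have keyW : ∀ (n : ℕ) (w : Equiv.Perm (Fin r)), permLen w = n →
      x * Tw w = c ^ n * x := by
    intro n
    induction n using Nat.strong_induction_on with
    | _ n ih =>
      intro w hw
      by_cases hn : n = 0
      · subst hn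
        have hw1 : w = 1 := by
          apply perm_eq_one_of_no_descent
          intro i h1 h2 hlt
          have : (⟨i - 1, by omega⟩, (⟨i, h2⟩ : Fin r)) ∈
              Finset.univ.filter
                (fun p : Fin r × Fin r => p.1 < p.2 ∧ w p.2 < w p.1) := by
            simp only [Finset.mem_filter, Finset.mem_univ, true_and]
            exact ⟨by simp [Fin.lt_def]; omega, hlt⟩
          have hpos : 0 < permLen w := Finset.card_pos.mpr ⟨_, this⟩
          omega
        rw [hw1, hTw1, mul_one, pow_zero, one_mul]
      · obtain ⟨i, h1, h2, hdes⟩ := descent_of_permLen_pos w (by omega)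
        set a : Fin r := ⟨i - 1, by omega⟩ with ha
        set b : Fin r := ⟨i, h2⟩ with hb
        set s := Equiv.swap a b with hs
        set w' := w * s with hw'
        have hw's : w' * s = w := by
          rw [hw', mul_assoc, hs, Equiv.swap_mul_self, mul_one]
        have hd' : w' a < w' b := by
          have h1' : w' a = w b := by
            simp [hw', hs, Equiv.Perm.mul_apply, Equiv.swap_apply_left]
          have h2' : w' b = w a := by
            simp [hw', hs, Equiv.Perm.mul_apply, Equiv.swap_apply_right]
          rw [h1', h2']; exact hdes
        have hlen : permLen w = permLen w' + 1 := by
          rw [← hw's]; exact permLen_mul_swap w' h1 h2 hd'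
        have hTwW : Tw w = Tw w' * T i := by
          rw [← hw's, hTwmul w' s (by
            rw [permLen_mul_swap w' h1 h2 hd', permLen_swap_adj h1 h2]),
            hTwgen i h1 h2]
        have hxw' : x * Tw w' = c ^ (n - 1) * x :=
          ih (n - 1) (by omega) w' (by omega)
        have hnn : n - 1 + 1 = n := by omega
        rw [hTwW, ← mul_assoc, hxw', mul_assoc, key i h1 h2, ← mul_assoc,
          ← pow_succ, hnn]
  -- Step 3 : x * h always equals x * a with a in the span of L-monomials
  set A := Submodule.span R (Set.range fun b : Fin r → Fin m => akLmonF L b)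
    with hAdef
  have hxA : ∀ h : H, ∃ a ∈ A, x * h = x * a := by
    intro h
    have hh : h ∈ Submodule.span R
        (Set.range fun p : Equiv.Perm (Fin r) × (Fin r → Fin m) =>
          Tw p.1 * akLmonF L p.2) := hSpan trivial
    induction hh using Submodule.span_induction with
    | mem y hy =>
      obtain ⟨⟨w, bb⟩, rfl⟩ := hy
      refine ⟨(q ^ permLen w) • akLmonF L bb, ?_, ?_⟩
      · exact Submodule.smul_mem _ _ (Submodule.subset_span ⟨bb, rfl⟩)
      · rw [Algebra.smul_def, map_pow, ← hc, ← mul_assoc, ← mul_assoc,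
          keyW (permLen w) w rfl]
        congr 1
        exact (Commute.pow_right (hcomm x) (permLen w)).symm
    | zero => exact ⟨0, Submodule.zero_mem _, rfl⟩
    | add y z hy hz ihy ihz =>
      obtain ⟨ay, hay, hxy⟩ := ihy
      obtain ⟨az, haz, hxz⟩ := ihz
      exact ⟨ay + az, Submodule.add_mem _ hay haz, by
        rw [mul_add, mul_add, hxy, hxz]⟩
    | smul t y hy ihy =>
      obtain ⟨ay, hay, hxy⟩ := ihy
      exact ⟨t • ay, Submodule.smul_mem _ _ hay, by
        rw [mul_smul_comm, mul_smul_comm, hxy]⟩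
  -- Step 4 : elements of A commute with each other
  have hmon : ∀ bb cc : Fin r → Fin m, Commute (akLmonF L bb) (akLmonF L cc) := by
    intro bb cc
    unfold akLmonF
    apply Commute.list_prod_left
    intro z hz
    rw [List.mem_ofFn] at hz
    obtain ⟨j, rfl⟩ := hz
    apply Commute.list_prod_right
    intro y hy
    rw [List.mem_ofFn] at hy
    obtain ⟨k, rfl⟩ := hy
    exact (Commute.pow_pow (by
      exact hLL ((j : ℕ) + 1) ((k : ℕ) + 1) (by omega) (by omega) (by omega)
        (by omega)) _ _)
  have hAcomm : ∀ a ∈ A, ∀ b ∈ A, a * b = b * a := by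
    intro a haA
    induction haA using Submodule.span_induction with
    | mem y hy =>
      obtain ⟨bb, rfl⟩ := hy
      intro b hbA
      induction hbA using Submodule.span_induction with
      | mem z hz =>
        obtain ⟨cc, rfl⟩ := hz
        exact hmon bb cc
      | zero => simp
      | add z z' hz hz' ihz ihz' => rw [mul_add, add_mul, ihz, ihz']
      | smul t z hz ihz => rw [mul_smul_comm, smul_mul_assoc, ihz]
    | zero => intro b hbA; simp
    | add y y' hy hy' ihy ihy' =>
      intro b hbA
      rw [add_mul, mul_add, ihy b hbA, ihy' b hbA]
    | smul t y hy ihy =>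
      intro b hbA
      rw [smul_mul_assoc, mul_smul_comm, ihy b hbA]
  -- Step 5 : assemble
  have hX' : x ∈ Submodule.span Hᵐᵒᵖ ({x} : Set H) :=
    Submodule.mem_span_singleton_self x
  set X : ↥(Submodule.span Hᵐᵒᵖ ({x} : Set H)) := ⟨x, hX'⟩ with hX
  have hval : ∀ v : ↥(Submodule.span Hᵐᵒᵖ ({x} : Set H)),
      ∃ h : H, v = MulOpposite.op h • X := by
    intro v
    obtain ⟨hh, hhv⟩ := Submodule.mem_span_singleton.mp v.2
    exact ⟨hh.unop, Subtype.ext (by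
      rw [← hhv]
      simp [hX])⟩
  have hend : ∀ (e : Module.End Hᵐᵒᵖ ↥(Submodule.span Hᵐᵒᵖ ({x} : Set H))),
      ∃ a ∈ A, e X = MulOpposite.op a • X := by
    intro e
    obtain ⟨h, hh⟩ := hval (e X)
    obtain ⟨a, haA, hxa⟩ := hxA h
    refine ⟨a, haA, ?_⟩
    rw [hh]
    apply Subtype.ext
    show (MulOpposite.op h • X).1 = (MulOpposite.op a • X).1
    simp only [hX, SetLike.val_smul, MulOpposite.smul_eq_mul_unop,
      MulOpposite.unop_op]
    exact hxa
  obtain ⟨a, haA, hfa⟩ := hend f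
  obtain ⟨b, hbA, hgb⟩ := hend g
  have hkey : (f * g) X = (g * f) X := by
    rw [Module.End.mul_apply, Module.End.mul_apply, hgb, hfa, map_smul, map_smul,
      hfa, hgb, smul_smul, smul_smul, ← MulOpposite.op_mul, ← MulOpposite.op_mul,
      hAcomm a haA b hbA]
  refine LinearMap.ext fun v => ?_
  obtain ⟨h, rfl⟩ := hval v
  simp only [Module.End.mul_apply, map_smul]
  rw [← Module.End.mul_apply f g, ← Module.End.mul_apply g f, hkey]
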